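/- arXiv:1903.01351 — 5 statements merged into one kernel-verified Lean document; each statement's English description precedes it below -/
import Mathlib

section
/- Let p, q ≥ 2 be integers, and let a, b, u, v be integers with a ≤ p−1, b ≤ q−1, u ≥ 0, v ≥ 0. If (u−a) − p(v−b) ≡ 0 (mod pq−1), then u ≥ a or v ≥ q−1+b. -/
/-- Lemma `GradingIdeal`(i) for the loop polynomial `W = x^p y + x y^q`. -/
theorem loop_grading_ideal_i (p q a b u v : ℤ) (hp : 2 ≤ p) (hq : 2 ≤ q)
    (ha : a ≤ p - 1) (hb : b ≤ q - 1) (hu : 0 ≤ u) (hv : 0 ≤ v)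
    (hdvd : (p * q - 1) ∣ ((u - a) - p * (v - b))) :
    a ≤ u ∨ q - 1 + b ≤ v := by
  by_contra h
  push_neg at h
  obtain ⟨h1, h2⟩ := h
  obtain ⟨k, hk⟩ := hdvd
  have hk0 : k = 0 := by
    by_contra hk0
    rcases lt_or_gt_of_ne hk0 with hneg | hpos
    · nlinarith [mul_le_mul_of_nonneg_left (by linarith : k ≤ -1) (by nlinarith : (0:ℤ) ≤ p*q-1)]
    · nlinarith [mul_le_mul_of_nonneg_left (by linarith : 1 ≤ k) (by nlinarith : (0:ℤ) ≤ p*q-1)]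
  rw [hk0, mul_zero] at hk
  -- u - a = p * (v - b), with u - a < 0 and v - b > -(q-1)... 
  have hY : v - b ≤ -1 := by nlinarith
  nlinarith
end

section
/- Let p, q ≥ 2 be integers, and let a, b, u, v be integers with a ≤ p−2, b ≤ q−1, u ≥ 0, v ≥ 0. If (u−a) − p(v−b) ≡ 0 (mod pq−1), then u ≥ a or v ≥ q+b. -/
/-- Lemma `GradingIdeal`(ii) for the loop polynomial `W = x^p y + x y^q`. -/
theorem loop_grading_ideal_ii (p q a b u v : ℤ) (hp : 2 ≤ p) (hq : 2 ≤ q)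
    (ha : a ≤ p - 2) (hb : b ≤ q - 1) (hu : 0 ≤ u) (hv : 0 ≤ v)
    (hdvd : (p * q - 1) ∣ ((u - a) - p * (v - b))) :
    a ≤ u ∨ q + b ≤ v := by
  by_contra h
  push_neg at h
  obtain ⟨h1, h2⟩ := h
  obtain ⟨k, hk⟩ := hdvd
  have hk0 : k = 0 := by
    rcases lt_trichotomy k 0 with hlt | heq | hgt
    · -- k ≤ -1, so RHS ≤ -(pq-1), but LHS ≥ -(pq-2)
      nlinarith [mul_le_mul_of_nonneg_left (show k ≤ -1 by omega) (show (0:ℤ) ≤ p * q - 1 by nlinarith)]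
    · exact heq
    · nlinarith [mul_le_mul_of_nonneg_left (show 1 ≤ k by omega) (show (0:ℤ) ≤ p * q - 1 by nlinarith)]
  rw [hk0, mul_zero] at hk
  -- u - a = p * (v - b)
  have hvb : v - b ≤ -1 := by nlinarith
  nlinarith
end

section
/- Let p, q ≥ 2 be integers and let u, v be nonnegative integers, not both zero, with u − pv ≡ 0 (mod pq−1). Then (u ≥ pq−1 and v = 0), or (v ≥ pq−1 and u = 0), or (u ≥ p and v ≥ 1), or (u ≥ 1 and v ≥ q). -/
/-- Lemma `GradingZero` for the loop polynomial `W = x^p y + x y^q`. -/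
theorem loop_grading_zero (p q u v : ℤ) (hp : 2 ≤ p) (hq : 2 ≤ q)
    (hu : 0 ≤ u) (hv : 0 ≤ v) (hne : ¬(u = 0 ∧ v = 0))
    (hdvd : (p * q - 1) ∣ (u - p * v)) :
    (p * q - 1 ≤ u ∧ v = 0) ∨ (p * q - 1 ≤ v ∧ u = 0) ∨
      (p ≤ u ∧ 1 ≤ v) ∨ (1 ≤ u ∧ q ≤ v) := by
  obtain ⟨k, hk⟩ := hdvd
  have hN : (0:ℤ) < p * q - 1 := by nlinarith
  rcases eq_or_lt_of_le hv with hv0 | hv1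
  · -- v = 0
    have hv0 : v = 0 := hv0.symm
    have hu1 : 1 ≤ u := by
      rcases eq_or_lt_of_le hu with h | h
      · exact absurd ⟨h.symm, hv0⟩ hne
      · linarith
    have hk1 : 1 ≤ k := by
      by_contra h
      push_neg at h
      have h2 : k ≤ 0 := by omega
      have := mul_nonpos_of_nonneg_of_nonpos hN.le h2
      rw [hv0] at hk
      linarith
    have := mul_le_mul_of_nonneg_left hk1 hN.le
    left
    constructor
    · rw [hv0] at hk; linarith
    · exact hv0
  · -- 1 ≤ v
    rcases le_or_gt q v with hvq | hvq
    · rcases eq_or_lt_of_le hu with hu0 | hu1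
      · -- u = 0
        have hm : p * v = (p * q - 1) * (-k) := by linarith
        have hdv : (p * q - 1) ∣ v := ⟨q * (-k) - v, by nlinarith⟩
        obtain ⟨m, hm2⟩ := hdv
        have hm1 : 1 ≤ m := by
          by_contra h
          push_neg at h
          have h2 : m ≤ 0 := by omega
          have := mul_nonpos_of_nonneg_of_nonpos hN.le h2
          linarith
        have := mul_le_mul_of_nonneg_left hm1 hN.le
        right; left
        exact ⟨by linarith, hu0.symm⟩
      · right; right; right; exact ⟨hu1, hvq⟩
    · -- 1 ≤ v < q
      have hk0 : 0 ≤ k := by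
        by_contra h
        push_neg at h
        have h2 : k ≤ -1 := by omega
        have h3 := mul_le_mul_of_nonneg_left h2 hN.le
        have h4 : v ≤ q - 1 := by omega
        have h5 := mul_le_mul_of_nonneg_left h4 (by linarith : (0:ℤ) ≤ p)
        nlinarith
      have h6 := mul_nonneg hN.le hk0
      have h7 : 1 ≤ v := hv1
      have h8 := mul_le_mul_of_nonneg_left h7 (by linarith : (0:ℤ) ≤ p)
      right; right; left
      exact ⟨by nlinarith, hv1⟩
end

section
/- Let p, q ≥ 2 and let a, b, u, v be integers with 0 ≤ a ≤ p−1, 0 ≤ b ≤ q−1, u, v ≥ 0, and u − pv ≡ a − pb (mod pq). Then (u ≥ a and v ≥ b) or u ≥ p + a. -/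
/-- Lemma `ChainGrading`(ii) for the chain polynomial `W = x^p y + y^q`. -/
theorem chain_grading_ii (p q a b u v : ℤ) (hp : 2 ≤ p) (hq : 2 ≤ q)
    (ha0 : 0 ≤ a) (ha : a ≤ p - 1) (hb0 : 0 ≤ b) (hb : b ≤ q - 1)
    (hu : 0 ≤ u) (hv : 0 ≤ v)
    (hdvd : (p * q) ∣ ((u - p * v) - (a - p * b))) :
    (a ≤ u ∧ b ≤ v) ∨ p + a ≤ u := by
  rcases hdvd with ⟨k, hk⟩
  by_cases h : p + a ≤ u
  · right; exact h
  push_neg at h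
  left
  have hm : u - a = p * (v - b + q * k) := by ring_nf; linarith [hk]; 
  set m := v - b + q * k with hmdef
  rcases lt_trichotomy m 0 with hm0 | hm0 | hm0
  · exfalso
    have : m ≤ -1 := by omega
    nlinarith
  · have hua : u = a := by
      rw [hm0, mul_zero] at hm; linarith
    have hvb : v - b = -(q * k) := by rw [hmdef] at hm0; linarith
    constructor
    · omega
    · rcases lt_trichotomy k 0 with hk0 | hk0 | hk0
      · nlinarith
      · rw [hk0, mul_zero, neg_zero] at hvb; omega
      · exfalso
        have : 1 ≤ k := by omega
        nlinarith
  · exfalso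
    have : 1 ≤ m := by omega
    nlinarith
end

section
/- Let p, q ≥ 2. Define φ(s,t) = 2πl/(p−1) + e^{−2s}(t − θ)/(e^{2s} + e^{−2s}) for real constants l, θ. Then the curve (x(t), y(t)) = √(δ/ε)·(e^{s + iφ(s,t)}, e^{−s + i(t − φ(s,t))}) satisfies the parallel transport ODE (ẋ, ẏ) = (−ċ/(ε(|x|²+|y|²)))·(ȳ, x̄) along the base path c(t) = −δ e^{it}, for every fixed real s and all real δ, ε > 0. -/
open Real Complex

/-- The rotating hyperbola `(x(t), y(t)) = √(δ/ε)(e^{s+iφ(s,t)}, e^{-s+i(t-φ(s,t))})`,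
with `φ(s,t) = 2πl/(p-1) + e^{-2s}(t-θ)/(e^{2s}+e^{-2s})`, solves the symplectic
parallel transport ODE `(ẋ, ẏ) = (-ċ/(ε(|x|²+|y|²)))(ȳ, x̄)` over the base path
`c(t) = -δ e^{it}`. -/
theorem neck_parallel_transport (p q : ℕ) (hp : 2 ≤ p) (hq : 2 ≤ q)
    (l θ s δ ε : ℝ) (hδ : 0 < δ) (hε : 0 < ε)
    (φ : ℝ → ℝ)
    (hφ : φ = fun t : ℝ => 2 * π * l / ((p : ℝ) - 1)
      + Real.exp (-(2 * s)) * (t - θ) / (Real.exp (2 * s) + Real.exp (-(2 * s))))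
    (x y c : ℝ → ℂ)
    (hx : x = fun t : ℝ => (Real.sqrt (δ / ε) : ℂ) *
      Complex.exp ((s : ℂ) + Complex.I * ((φ t : ℝ) : ℂ)))
    (hy : y = fun t : ℝ => (Real.sqrt (δ / ε) : ℂ) *
      Complex.exp (-(s : ℂ) + Complex.I * (((t : ℝ) : ℂ) - ((φ t : ℝ) : ℂ))))
    (hc : c = fun t : ℝ => -(δ : ℂ) * Complex.exp (Complex.I * (t : ℂ))) :
    ∀ t : ℝ,
      HasDerivAt x
        (-(deriv c t) /
            ((ε : ℂ) * (((‖x t‖ ^ 2 + ‖y t‖ ^ 2 : ℝ)) : ℂ)) *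
          (starRingEnd ℂ) (y t)) t ∧
      HasDerivAt y
        (-(deriv c t) /
            ((ε : ℂ) * (((‖x t‖ ^ 2 + ‖y t‖ ^ 2 : ℝ)) : ℂ)) *
          (starRingEnd ℂ) (x t)) t := by
  intro t
  set B : ℝ := Real.exp (-(2 * s)) / (Real.exp (2 * s) + Real.exp (-(2 * s))) with hBdef
  -- derivative of φ
  have hφd : HasDerivAt φ B t := by
    rw [hφ]
    have h1 : HasDerivAt (fun u : ℝ => u - θ) 1 t := (hasDerivAt_id t).sub_const θ
    have h2 := ((h1.const_mul (Real.exp (-(2*s)))).div_const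
      (Real.exp (2*s) + Real.exp (-(2*s)))).const_add (2 * π * l / ((p:ℝ)-1))
    simpa [hBdef, mul_comm, mul_div_assoc] using h2
  -- derivative of x
  have hxd : HasDerivAt x (x t * (Complex.I * (B : ℂ))) t := by
    rw [hx]
    have hin : HasDerivAt (fun u : ℝ => (s : ℂ) + Complex.I * ((φ u : ℝ) : ℂ))
        (Complex.I * (B : ℂ)) t := (hφd.ofReal_comp.const_mul Complex.I).const_add _
    simpa [mul_assoc] using (hin.cexp.const_mul ((Real.sqrt (δ / ε) : ℂ)))
  -- derivative of y
  have hyd : HasDerivAt y (y t * (Complex.I * ((1 : ℂ) - (B : ℂ)))) t := by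
    rw [hy]
    have hin : HasDerivAt (fun u : ℝ => -(s : ℂ) + Complex.I * (((u : ℝ) : ℂ) - ((φ u : ℝ) : ℂ)))
        (Complex.I * ((1 : ℂ) - (B : ℂ))) t := by
      have h0 : HasDerivAt (fun u : ℝ => ((u : ℝ) : ℂ) - ((φ u : ℝ) : ℂ))
          ((1 : ℂ) - (B : ℂ)) t := by
        have := (hasDerivAt_id t).ofReal_comp.sub hφd.ofReal_comp
        simp at this; exact this
      exact (h0.const_mul Complex.I).const_add _
    simpa [mul_assoc] using (hin.cexp.const_mul ((Real.sqrt (δ / ε) : ℂ)))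
  -- derivative of c
  have hcd : deriv c t = -(δ : ℂ) * (Complex.exp (Complex.I * (t : ℂ)) * Complex.I) := by
    have hin : HasDerivAt (fun u : ℝ => Complex.I * ((u : ℝ) : ℂ)) Complex.I t := by
      simpa using ((hasDerivAt_id t).ofReal_comp.const_mul Complex.I)
    have := (hin.cexp.const_mul (-(δ : ℂ)))
    rw [hc]
    simpa [mul_assoc] using this.deriv
  -- norms
  have hδε : (0:ℝ) ≤ δ / ε := le_of_lt (div_pos hδ hε)
  have habsx : ‖x t‖ ^ 2 = (δ / ε) * Real.exp s ^ 2 := by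
    rw [hx]
    simp [Complex.norm_exp, _root_.abs_of_nonneg (Real.sqrt_nonneg _), mul_pow,
      Real.sq_sqrt hδε]
  have habsy : ‖y t‖ ^ 2 = (δ / ε) * Real.exp (-s) ^ 2 := by
    rw [hy]
    simp [Complex.norm_exp, _root_.abs_of_nonneg (Real.sqrt_nonneg _), mul_pow,
      Real.sq_sqrt hδε]
  set E : ℝ := Real.exp s with hE
  have hEpos : (0:ℝ) < E := Real.exp_pos s
  have hEne : (E : ℂ) ≠ 0 := by exact_mod_cast ne_of_gt hEpos
  have hexp2 : Real.exp (2*s) = E^2 := by rw [hE, ← Real.exp_nat_mul]; norm_num [mul_comm]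
  have hexpm2 : Real.exp (-(2*s)) = (E^2)⁻¹ := by rw [Real.exp_neg, hexp2]
  have hexpms : Real.exp (-s) = E⁻¹ := by rw [Real.exp_neg]
  have habs : ((‖x t‖ ^ 2 + ‖y t‖ ^ 2 : ℝ) : ℂ)
      = (δ / ε : ℂ) * (((E:ℂ)^4 + 1) / (E:ℂ)^2) := by
    have hre : (‖x t‖ ^ 2 + ‖y t‖ ^ 2 : ℝ)
        = δ/ε * ((E^4+1)/E^2) := by
      rw [habsx, habsy, hexpms]
      field_simp
    rw [hre]
    push_cast
    ring
  have hεne : (ε : ℂ) ≠ 0 := by exact_mod_cast ne_of_gt hε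
  have hδne : (δ : ℂ) ≠ 0 := by exact_mod_cast ne_of_gt hδ
  have hden : ((E:ℂ)^4 + 1) ≠ 0 := by
    have h1 : (0:ℝ) < E^4 + 1 := by positivity
    have h2 : ((E:ℂ)^4 + 1) = ((E^4 + 1 : ℝ) : ℂ) := by push_cast; ring
    rw [h2]
    exact_mod_cast ne_of_gt h1
  -- complex exponential values
  have hBC : ((B : ℝ) : ℂ) = 1 / ((E:ℂ)^4 + 1) := by
    rw [hBdef, hexp2, hexpm2]
    have h1 : (0:ℝ) < E^2 := by positivity
    have h2 : (0:ℝ) < E^4 + 1 := by positivity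
    rw [show (E^2)⁻¹ / (E^2 + (E^2)⁻¹) = 1/(E^4+1) by field_simp]
    push_cast
    ring
  have hxval : x t = (Real.sqrt (δ / ε) : ℂ) * ((E:ℂ) * Complex.exp (Complex.I * ((φ t : ℝ) : ℂ))) := by
    rw [hx]
    simp only [Complex.exp_add]
    rw [hE, Complex.ofReal_exp]
  have hyval : y t = (Real.sqrt (δ / ε) : ℂ) * ((E:ℂ)⁻¹ *
      (Complex.exp (Complex.I * ((t : ℝ) : ℂ)) * (Complex.exp (Complex.I * ((φ t : ℝ) : ℂ)))⁻¹)) := by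
    simp only [hy]
    rw [show (-(s:ℂ) + Complex.I * (((t : ℝ) : ℂ) - ((φ t : ℝ) : ℂ)))
        = -(s:ℂ) + (Complex.I * ((t : ℝ) : ℂ) - Complex.I * ((φ t : ℝ) : ℂ)) by ring]
    rw [Complex.exp_add, Complex.exp_sub, Complex.exp_neg, hE, Complex.ofReal_exp]
    ring
  have hconjy : (starRingEnd ℂ) (y t) = (Real.sqrt (δ / ε) : ℂ) * ((E:ℂ)⁻¹ *
      ((Complex.exp (Complex.I * ((t : ℝ) : ℂ)))⁻¹ * Complex.exp (Complex.I * ((φ t : ℝ) : ℂ)))) := by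
    simp only [hy]
    rw [show (-(s:ℂ) + Complex.I * (((t : ℝ) : ℂ) - ((φ t : ℝ) : ℂ)))
        = -(s:ℂ) + (Complex.I * ((t : ℝ) : ℂ) - Complex.I * ((φ t : ℝ) : ℂ)) by ring]
    rw [map_mul, ← Complex.exp_conj]
    have : (starRingEnd ℂ) (-(s:ℂ) + (Complex.I * ((t : ℝ) : ℂ) - Complex.I * ((φ t : ℝ) : ℂ)))
        = -(s:ℂ) + (Complex.I * ((φ t : ℝ) : ℂ) - Complex.I * ((t : ℝ) : ℂ)) := by
      simp [map_sub, map_add, map_mul, Complex.conj_I, Complex.conj_ofReal]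
      ring
    rw [this, Complex.exp_add, Complex.exp_sub, Complex.exp_neg, hE, Complex.ofReal_exp,
      Complex.conj_ofReal]
    ring
  have hconjx : (starRingEnd ℂ) (x t) = (Real.sqrt (δ / ε) : ℂ) * ((E:ℂ) *
      (Complex.exp (Complex.I * ((φ t : ℝ) : ℂ)))⁻¹) := by
    simp only [hx]
    rw [map_mul, ← Complex.exp_conj]
    have : (starRingEnd ℂ) ((s:ℂ) + Complex.I * ((φ t : ℝ) : ℂ))
        = (s:ℂ) - Complex.I * ((φ t : ℝ) : ℂ) := by
      simp [map_add, map_mul, Complex.conj_I, Complex.conj_ofReal]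
      ring
    rw [this, Complex.exp_sub, hE, Complex.ofReal_exp, Complex.conj_ofReal]
    ring
  have hTne : Complex.exp (Complex.I * ((t : ℝ) : ℂ)) ≠ 0 := Complex.exp_ne_zero _
  have hPne : Complex.exp (Complex.I * ((φ t : ℝ) : ℂ)) ≠ 0 := Complex.exp_ne_zero _
  set r : ℂ := ((Real.sqrt (δ / ε) : ℝ) : ℂ) with hr
  set T : ℂ := Complex.exp (Complex.I * ((t : ℝ) : ℂ)) with hT
  set P : ℂ := Complex.exp (Complex.I * ((φ t : ℝ) : ℂ)) with hP
  constructor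
  · have heq : -(deriv c t) / ((ε : ℂ) * (((‖x t‖ ^ 2 + ‖y t‖ ^ 2 : ℝ)) : ℂ))
        * (starRingEnd ℂ) (y t) = x t * (Complex.I * (B : ℂ)) := by
      rw [hcd, habs, hconjy, hxval, hBC]
      field_simp
    rw [heq.symm] at hxd
    exact hxd
  · have heq : -(deriv c t) / ((ε : ℂ) * (((‖x t‖ ^ 2 + ‖y t‖ ^ 2 : ℝ)) : ℂ))
        * (starRingEnd ℂ) (x t) = y t * (Complex.I * ((1:ℂ) - (B : ℂ))) := by
      rw [hcd, habs, hconjx, hyval, hBC]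
      field_simp
      ring
    rw [heq.symm] at hyd
    exact hyd
end
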